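/- arXiv:1609.07204 — 5 statements merged into one kernel-verified Lean document; each statement's English description precedes it below -/
import Mathlib

section
/- Suppose $a_1, \ldots, a_n \in \mathbb{C} \setminus \Lambda$ satisfy $\wp(a_i) \neq \wp(a_j)$ for $i \neq j$. Then the system of equations $\sum_{j \neq i} \frac{\wp'(a_i) + \wp'(a_j)}{\wp(a_i) - \wp(a_j)} = 0$ for all $1 \le i \le n$ is equivalent to the system $\sum_{i=1}^n \wp'(a_i)\,\wp(a_i)^l = 0$ for all $0 \le l \le n-2$. -/
noncomputable section

/-- The lattice `ℤω₁ + ℤω₂` as a set of complex numbers. -/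
def latticePts (ω1 ω2 : ℂ) : Set ℂ :=
  {z | ∃ m n : ℤ, z = (m : ℂ) * ω1 + (n : ℂ) * ω2}

/-- A nonzero lattice point indexed by `(m, n) ∈ ℤ² \ {0}`. -/
def latPt (ω1 ω2 : ℂ) (p : ℤ × ℤ) : ℂ := (p.1 : ℂ) * ω1 + (p.2 : ℂ) * ω2

/-- The Weierstrass elliptic function `℘` of the lattice `ℤω₁ + ℤω₂`. -/
def wp (ω1 ω2 : ℂ) (z : ℂ) : ℂ :=
  1 / z ^ 2 + ∑' p : ℤ × ℤ,
    if p = 0 then 0 else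
      (1 / (z - latPt ω1 ω2 p) ^ 2 - 1 / (latPt ω1 ω2 p) ^ 2)

/-- The Weierstrass zeta function `ζ` of the lattice `ℤω₁ + ℤω₂`. -/
def wzeta (ω1 ω2 : ℂ) (z : ℂ) : ℂ :=
  1 / z + ∑' p : ℤ × ℤ,
    if p = 0 then 0 else
      (1 / (z - latPt ω1 ω2 p) + 1 / latPt ω1 ω2 p + z / (latPt ω1 ω2 p) ^ 2)

/-- The derivative `℘'`. -/
def wp' (ω1 ω2 : ℂ) : ℂ → ℂ := deriv (wp ω1 ω2)

/-- The second derivative `℘''`. -/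
def wp'' (ω1 ω2 : ℂ) : ℂ → ℂ := deriv (deriv (wp ω1 ω2))

/-- The invariant `g₂ = 60 ∑_{ω ≠ 0} ω⁻⁴`. -/
def g2 (ω1 ω2 : ℂ) : ℂ :=
  60 * ∑' p : ℤ × ℤ, if p = 0 then 0 else 1 / (latPt ω1 ω2 p) ^ 4

end

open Finset Polynomial in
/-- Key Lagrange-interpolation identity: the `(n-1)`-st "coefficient moments" of the
weights `w j = ∏_{k ≠ j} (x j - x k)⁻¹`. -/
private lemma key_w {n : ℕ} (x : Fin n → ℂ) (hx : Function.Injective x)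
    (l : ℕ) (hl : l < n) :
    ∑ j, x j ^ l * (∏ k ∈ univ.erase j, (x j - x k)⁻¹)
      = if l = n - 1 then 1 else 0 := by
  have hinj : Set.InjOn x (univ : Finset (Fin n)) := hx.injOn
  have hcard : #(univ : Finset (Fin n)) = n := by simp
  have hdeg : (X ^ l : ℂ[X]).degree < (#(univ : Finset (Fin n)) : WithBot ℕ) := by
    rw [degree_X_pow, hcard]; exact_mod_cast hl
  have hX : (X ^ l : ℂ[X]) = Lagrange.interpolate univ x (fun j => x j ^ l) :=
    Lagrange.eq_interpolate_of_eval_eq (fun j => x j ^ l) hinj hdeg (fun i _ => by simp)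
  have hco := congrArg (fun p : ℂ[X] => p.coeff (n - 1)) hX
  simp only [coeff_X_pow, Lagrange.interpolate_apply, finset_sum_coeff, coeff_C_mul] at hco
  have hb : ∀ i : Fin n, (Lagrange.basis univ x i).coeff (n - 1)
      = ∏ k ∈ univ.erase i, (x i - x k)⁻¹ := by
    intro i
    have hnd := Lagrange.natDegree_basis hinj (mem_univ i)
    rw [hcard] at hnd
    have h1 : (Lagrange.basis univ x i).coeff (n - 1)
        = (Lagrange.basis univ x i).leadingCoeff := by
      rw [Polynomial.leadingCoeff, hnd]
    rw [h1, Lagrange.basis, leadingCoeff_prod]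
    refine prod_congr rfl fun j _ => ?_
    rw [Lagrange.basisDivisor, leadingCoeff_mul, leadingCoeff_C, leadingCoeff_X_sub_C, mul_one]
  simp only [hb] at hco
  rw [← hco]
  simp [eq_comm]

open Finset Polynomial in
private lemma derivative_finset_prod {ι : Type*} [DecidableEq ι] (s : Finset ι)
    (f : ι → ℂ[X]) :
    derivative (∏ i ∈ s, f i)
      = ∑ i ∈ s, (∏ j ∈ s.erase i, f j) * derivative (f i) := by
  classical
  induction s using Finset.induction_on with
  | empty => simp
  | @insert a s ha ih =>
    rw [Finset.prod_insert ha, Polynomial.derivative_mul, Finset.sum_insert ha,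
      Finset.erase_insert ha, ih, Finset.mul_sum]
    congr 1
    · exact mul_comm _ _
    · refine Finset.sum_congr rfl fun i hi => ?_
      rw [Finset.erase_insert_of_ne (by rintro rfl; exact ha hi),
        Finset.prod_insert (fun h => ha (Finset.mem_of_mem_erase h))]
      ring

open Finset Polynomial in
/-- The purely algebraic core: for distinct `x i` the balance system and the
moment system on `y` are equivalent. -/
private theorem core_balance_iff_moments (n : ℕ) (hn : 2 ≤ n) (x y : Fin n → ℂ)
    (hx : Function.Injective x) :
    (∀ i, ∑ j ∈ univ.erase i, (y i + y j) / (x i - x j) = 0)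
      ↔ ∀ l : ℕ, l + 2 ≤ n → ∑ i, y i * x i ^ l = 0 := by
  classical
  set w : Fin n → ℂ := fun i => ∏ k ∈ univ.erase i, (x i - x k)⁻¹ with hw
  set d : Fin n → ℂ := fun i => ∏ k ∈ univ.erase i, (x i - x k) with hdd
  have hsub : ∀ {i j : Fin n}, j ∈ univ.erase i → x i - x j ≠ 0 := by
    intro i j hj
    rw [sub_ne_zero]
    exact fun h => (mem_erase.mp hj).1 (hx h.symm)
  have hd : ∀ i, d i ≠ 0 := fun i =>
    prod_ne_zero_iff.mpr fun j hj => hsub hj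
  have hdw : ∀ i, d i * w i = 1 := by
    intro i
    rw [hw, hdd, ← prod_mul_distrib]
    exact prod_eq_one fun j hj => mul_inv_cancel₀ (hsub hj)
  set P : ℂ[X] := ∑ j, C (y j) * ∏ k ∈ univ.erase j, (X - C (x k)) with hP
  have hPdeg : P.natDegree ≤ n - 1 := by
    refine natDegree_sum_le_of_forall_le _ _ fun j _ => ?_
    refine (natDegree_C_mul_le _ _).trans ?_
    refine (natDegree_prod_le _ _).trans ?_
    calc ∑ k ∈ univ.erase j, (X - C (x k)).natDegree
        ≤ ∑ k ∈ univ.erase j, 1 := by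
          exact sum_le_sum fun k _ => natDegree_X_sub_C_le _
      _ = n - 1 := by simp [card_erase_of_mem]
  have hPeval : ∀ i, P.eval (x i) = y i * d i := by
    intro i
    rw [hP, eval_finset_sum]
    rw [Finset.sum_eq_single i]
    · simp [hdd, eval_prod]
    · intro j _ hji
      have hmem : i ∈ univ.erase j := mem_erase.mpr ⟨fun h => hji h.symm, mem_univ i⟩
      simp only [eval_mul, eval_C, eval_prod, eval_sub, eval_X]
      rw [prod_eq_zero hmem (by simp), mul_zero]
    · simp
  have hP'eval : ∀ i, P.derivative.eval (x i)
      = ∑ j ∈ univ.erase i, (y i + y j) * ∏ m ∈ (univ.erase i).erase j, (x i - x m) := by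
    intro i
    have hder : P.derivative
        = ∑ j, C (y j) * ∑ k ∈ univ.erase j,
            (∏ m ∈ (univ.erase j).erase k, (X - C (x m))) * derivative (X - C (x k)) := by
      rw [hP, derivative_sum]
      refine sum_congr rfl fun j _ => ?_
      rw [derivative_C_mul, derivative_finset_prod]
    rw [hder, eval_finset_sum]
    have hterm : ∀ j : Fin n, eval (x i)
        (C (y j) * ∑ k ∈ univ.erase j,
          (∏ m ∈ (univ.erase j).erase k, (X - C (x m))) * derivative (X - C (x k)))
        = y j * ∑ k ∈ univ.erase j,
            eval (x i) (∏ m ∈ (univ.erase j).erase k, (X - C (x m))) := by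
      intro j
      simp [eval_finset_sum]
    simp only [hterm]
    have hji : ∀ j : Fin n, j ≠ i →
        ∑ k ∈ univ.erase j, eval (x i) (∏ m ∈ (univ.erase j).erase k, (X - C (x m)))
          = ∏ m ∈ (univ.erase i).erase j, (x i - x m) := by
      intro j hji
      rw [Finset.sum_eq_single i]
      · rw [eval_prod, Finset.erase_right_comm]
        simp
      · intro k hk hki
        have hmem : i ∈ (univ.erase j).erase k :=
          mem_erase.mpr ⟨fun h => hki h.symm, mem_erase.mpr ⟨Ne.symm hji, mem_univ i⟩⟩
        rw [eval_prod, prod_eq_zero hmem (by simp)]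
      · intro h
        exact absurd (mem_erase.mpr ⟨Ne.symm hji, mem_univ i⟩) h
    rw [← Finset.add_sum_erase _ _ (mem_univ i)]
    have hrest : ∑ j ∈ univ.erase i,
        y j * ∑ k ∈ univ.erase j, eval (x i) (∏ m ∈ (univ.erase j).erase k, (X - C (x m)))
        = ∑ j ∈ univ.erase i, y j * ∏ m ∈ (univ.erase i).erase j, (x i - x m) := by
      refine sum_congr rfl fun j hj => ?_
      rw [hji j (mem_erase.mp hj).1]
    rw [hrest]
    have hii : ∑ k ∈ univ.erase i, eval (x i) (∏ m ∈ (univ.erase i).erase k, (X - C (x m)))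
        = ∑ k ∈ univ.erase i, ∏ m ∈ (univ.erase i).erase k, (x i - x m) := by
      refine sum_congr rfl fun k _ => ?_
      rw [eval_prod]; simp
    rw [hii, mul_sum, ← sum_add_distrib]
    exact sum_congr rfl fun j _ => by ring
  have hbal : ∀ i, (∑ j ∈ univ.erase i, (y i + y j) / (x i - x j)) * d i
      = P.derivative.eval (x i) := by
    intro i
    rw [hP'eval, sum_mul]
    refine sum_congr rfl fun j hj => ?_
    have hdi : d i = (x i - x j) * ∏ m ∈ (univ.erase i).erase j, (x i - x m) :=
      (Finset.mul_prod_erase _ _ hj).symm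
    rw [hdi, ← mul_assoc, div_mul_cancel₀ _ (hsub hj)]
  constructor
  · -- balance → moments
    intro hB l hl
    have h0 : ∀ i, P.derivative.eval (x i) = 0 := by
      intro i
      rw [← hbal, hB i, zero_mul]
    have hP' : P.derivative = 0 := by
      refine Polynomial.eq_zero_of_natDegree_lt_card_of_eval_eq_zero _ hx h0 ?_
      rw [Fintype.card_fin]
      calc P.derivative.natDegree ≤ P.natDegree - 1 := natDegree_derivative_le P
        _ < n := by omega
    have hPC : P = C (P.coeff 0) := eq_C_of_derivative_eq_zero hP'
    have hyw : ∀ i, y i = P.coeff 0 * w i := by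
      intro i
      have h1 : y i * d i = P.coeff 0 := by
        have h2 := hPeval i
        rw [hPC] at h2
        rw [← h2, eval_C]
      calc y i = y i * (d i * w i) := by rw [hdw, mul_one]
        _ = (y i * d i) * w i := by ring
        _ = P.coeff 0 * w i := by rw [h1]
    calc ∑ i, y i * x i ^ l = P.coeff 0 * ∑ i, x i ^ l * w i := by
          rw [mul_sum]; exact sum_congr rfl fun i _ => by rw [hyw i]; ring
      _ = 0 := by
          rw [key_w x hx l (by omega), if_neg (by omega), mul_zero]
  · -- moments → balance
    intro hM i
    set c : ℂ := ∑ j, y j * x j ^ (n - 1) with hc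
    have hyw : ∀ i, y i = c * w i := by
      have hv : (fun i => y i - c * w i) = 0 := by
        refine Matrix.eq_zero_of_mulVec_eq_zero
          (M := (Matrix.vandermonde x).transpose) ?_ ?_
        · rw [Matrix.det_transpose]
          exact Matrix.det_vandermonde_ne_zero_iff.mpr hx
        · funext l
          have hsplit : ((Matrix.vandermonde x).transpose.mulVec fun i => y i - c * w i) l
              = (∑ i, x i ^ (l : ℕ) * y i) - c * ∑ i, x i ^ (l : ℕ) * w i := by
            simp only [Matrix.mulVec, dotProduct, Matrix.transpose_apply,
              Matrix.vandermonde, Matrix.of_apply]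
            rw [mul_sum, ← Finset.sum_sub_distrib]
            exact sum_congr rfl fun i _ => by ring
          rw [Pi.zero_apply, hsplit, key_w x hx (l : ℕ) l.isLt]
          rcases eq_or_ne (l : ℕ) (n - 1) with h | h
          · rw [if_pos h]
            have : ∑ i, x i ^ (l : ℕ) * y i = c := by
              rw [hc, h]
              exact sum_congr rfl fun i _ => mul_comm _ _
            rw [this, mul_one, sub_self]
          · rw [if_neg h, mul_zero, sub_zero]
            have hl2 : (l : ℕ) + 2 ≤ n := by
              have := l.isLt; omega
            rw [← hM (l : ℕ) hl2]
            exact sum_congr rfl fun i _ => mul_comm _ _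
      intro i
      have := congrFun hv i
      simpa [sub_eq_zero] using this
    have hPC : P = C c := by
      have hz : P - C c = 0 := by
        refine Polynomial.eq_zero_of_natDegree_lt_card_of_eval_eq_zero _ hx ?_ ?_
        · intro j
          rw [eval_sub, eval_C, hPeval, hyw j, mul_assoc, mul_comm (w j), hdw, mul_one,
            sub_self]
        · rw [Fintype.card_fin]
          calc (P - C c).natDegree ≤ max P.natDegree (C c).natDegree := natDegree_sub_le _ _
            _ ≤ n - 1 := by
                refine max_le hPdeg ?_
                rw [natDegree_C]; omega
            _ < n := by omega
      exact sub_eq_zero.mp hz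
    have hP' : P.derivative = 0 := by rw [hPC, derivative_C]
    have h0 : (∑ j ∈ univ.erase i, (y i + y j) / (x i - x j)) * d i = 0 := by
      rw [hbal, hP', eval_zero]
    rcases mul_eq_zero.mp h0 with h | h
    · exact h
    · exact absurd h (hd i)

open Finset in
/-- Equivalence of the balance system and the moment system
(Proposition 5.8.3 of \[CLW\]). -/
theorem balance_iff_moments (ω1 ω2 : ℂ) (hτ : 0 < (ω2 / ω1).im)
    (n : ℕ) (hn : 2 ≤ n) (a : Fin n → ℂ)
    (ha : ∀ i, a i ∉ latticePts ω1 ω2)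
    (hdist : ∀ i j, i ≠ j → wp ω1 ω2 (a i) ≠ wp ω1 ω2 (a j)) :
    (∀ i, ∑ j ∈ univ.erase i,
        (wp' ω1 ω2 (a i) + wp' ω1 ω2 (a j)) / (wp ω1 ω2 (a i) - wp ω1 ω2 (a j)) = 0)
      ↔ (∀ l : ℕ, l + 2 ≤ n → ∑ i, wp' ω1 ω2 (a i) * wp ω1 ω2 (a i) ^ l = 0) := by
  have hx : Function.Injective (fun i => wp ω1 ω2 (a i)) := by
    intro i j h
    by_contra hne
    exact hdist i j hne h
  exact core_balance_iff_moments n hn (fun i => wp ω1 ω2 (a i)) (fun i => wp' ω1 ω2 (a i)) hx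
end

section
/- Suppose $a_1, \ldots, a_n \in \mathbb{C} \setminus \Lambda$ have pairwise distinct $\wp$-values and satisfy $\sum_{i=1}^n \wp'(a_i) \wp(a_i)^l = 0$ for $0 \le l \le n-2$. Then the quantity $C(a) := \wp'(a_i) \prod_{j \neq i} (\wp(a_i) - \wp(a_j))$ is independent of the choice of $i \in \{1, \ldots, n\}$. -/
open Finset Polynomial

/-- Divided-difference identity: `∑ i, (∏_{j≠i} (x i - x j))⁻¹ * x i ^ l` equals `1` if
`l = n - 1` and `0` if `l < n - 1`. -/
theorem sum_nodalWeight_pow {F : Type*} [Field F] {n : ℕ} {x : Fin n → F}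
    (hx : Function.Injective x) (l : ℕ) (hl : l < n) :
    ∑ i, (∏ j ∈ univ.erase i, (x i - x j))⁻¹ * x i ^ l
      = if l = n - 1 then 1 else 0 := by
  have hinj : Set.InjOn x (univ : Finset (Fin n)) := fun a _ b _ h => hx h
  have hdeg : (X ^ l : F[X]).degree < (univ : Finset (Fin n)).card := by
    rw [degree_X_pow, card_univ, Fintype.card_fin]
    exact_mod_cast hl
  have hP := Lagrange.eq_interpolate (f := (X ^ l : F[X])) hinj hdeg
  have hco := congrArg (fun p => Polynomial.coeff p (n - 1)) hP
  simp only [Lagrange.interpolate_apply] at hco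
  rw [coeff_X_pow, finset_sum_coeff] at hco
  have hbasis : ∀ i : Fin n, (Lagrange.basis univ x i).coeff (n - 1)
      = Lagrange.nodalWeight univ x i := by
    intro i
    have hmem : i ∈ (univ : Finset (Fin n)) := mem_univ i
    have hb : Lagrange.basis univ x i
        = C (Lagrange.nodalWeight univ x i) * Lagrange.nodal (univ.erase i) x := by
      rw [Lagrange.basis_eq_prod_sub_inv_mul_nodal_div hmem,
        ← Lagrange.nodal_erase_eq_nodal_div hmem]
    have hn : n ≠ 0 := by omega
    have hnd : (Lagrange.nodal (univ.erase i) x).natDegree = n - 1 := by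
      rw [Lagrange.natDegree_nodal, card_erase_of_mem hmem, card_univ, Fintype.card_fin]
    rw [hb, coeff_C_mul, ← hnd, (Lagrange.nodal_monic).coeff_natDegree, mul_one]
  simp only [coeff_C_mul, eval_pow, eval_X, hbasis] at hco
  have : ∑ i, (∏ j ∈ univ.erase i, (x i - x j))⁻¹ * x i ^ l
      = ∑ i, x i ^ l * Lagrange.nodalWeight univ x i := by
    refine Finset.sum_congr rfl fun i _ => ?_
    rw [Lagrange.nodalWeight, ← prod_inv_distrib, mul_comm]
  rw [this, ← hco]
  by_cases h : l = n - 1 <;> simp [h, eq_comm]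

/-- Abstract version of the theorem: pure algebra about `x i`, `y i`. -/
theorem Ca_independent_abstract {F : Type*} [Field F] {n : ℕ} {x y : Fin n → F}
    (hx : Function.Injective x)
    (hmom : ∀ l : ℕ, l + 2 ≤ n → ∑ i, y i * x i ^ l = 0) :
    ∀ i k : Fin n,
      y i * ∏ j ∈ univ.erase i, (x i - x j) =
      y k * ∏ j ∈ univ.erase k, (x k - x j) := by
  intro i k
  have hn : n ≠ 0 := fun h => (h ▸ i).elim0
  set s : F := ∑ j, y j * x j ^ (n - 1) with hs
  set w : Fin n → F := fun i => (∏ j ∈ univ.erase i, (x i - x j))⁻¹ with hw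
  have key : (fun i => y i - s * w i) = 0 := by
    apply Matrix.eq_zero_of_forall_pow_sum_mul_pow_eq_zero hx
    intro l
    have hl : (l : ℕ) < n := l.isLt
    have hW := sum_nodalWeight_pow hx l hl
    simp only [sub_mul, Finset.sum_sub_distrib, mul_assoc]
    rw [← Finset.mul_sum, hW]
    by_cases h : (l : ℕ) = n - 1
    · rw [if_pos h, mul_one, h, ← hs, sub_self]
    · rw [if_neg h, mul_zero, hmom l (by omega), sub_zero]
  have hyi : ∀ m : Fin n, y m = s * w m := by
    intro m
    have := congrFun key m
    simp only [Pi.zero_apply, sub_eq_zero] at this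
    exact this
  have hprod : ∀ m : Fin n, w m * ∏ j ∈ univ.erase m, (x m - x j) = 1 := by
    intro m
    rw [hw]
    refine inv_mul_cancel₀ (Finset.prod_ne_zero_iff.mpr fun j hj => ?_)
    exact sub_ne_zero_of_ne (fun h => (mem_erase.mp hj).1 (hx h.symm))
  rw [hyi i, hyi k, mul_assoc, mul_assoc, hprod i, hprod k]

open Finset in
/-- Under the moment conditions, `C(a) = ℘'(aᵢ) ∏_{j ≠ i} (℘(aᵢ) - ℘(aⱼ))` is
independent of the choice of `i`. -/
theorem Ca_independent (ω1 ω2 : ℂ) (hτ : 0 < (ω2 / ω1).im)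
    (n : ℕ) (a : Fin n → ℂ)
    (ha : ∀ i, a i ∉ latticePts ω1 ω2)
    (hdist : ∀ i j, i ≠ j → wp ω1 ω2 (a i) ≠ wp ω1 ω2 (a j))
    (hmom : ∀ l : ℕ, l + 2 ≤ n → ∑ i, wp' ω1 ω2 (a i) * wp ω1 ω2 (a i) ^ l = 0) :
    ∀ i k : Fin n,
      wp' ω1 ω2 (a i) * ∏ j ∈ univ.erase i, (wp ω1 ω2 (a i) - wp ω1 ω2 (a j)) =
      wp' ω1 ω2 (a k) * ∏ j ∈ univ.erase k, (wp ω1 ω2 (a k) - wp ω1 ω2 (a j)) := by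
  have hx : Function.Injective (fun i => wp ω1 ω2 (a i)) := fun i j h => by
    by_contra hij
    exact hdist i j hij h
  exact Ca_independent_abstract hx hmom
end

section
/- Let $f(z) = -\frac{c}{z - p} + h(z)$ near $p \in \mathbb{C}$, where $c \in \mathbb{C}$ and $h$ is holomorphic in a neighborhood of $p$. Write $f = u + iv$. Then $-\int_{|z-p|=r} u\, dv = \frac{\pi |c|^2}{r^2} + O(r)$ as $r \to 0$. -/
open Complex Real MeasureTheory intervalIntegral Metric

lemma my_interval_integral_conj {f : ℝ → ℂ} {a b : ℝ} :
    (∫ x in a..b, (starRingEnd ℂ) (f x)) = (starRingEnd ℂ) (∫ x in a..b, f x) := by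
  unfold intervalIntegral
  rw [integral_conj, integral_conj, map_sub]

open Complex Real in
/-- For `f(z) = -c/(z - p) + h(z)` with `h` holomorphic near `p`, writing
`f = u + iv`, the boundary term `-∫_{|z-p|=r} u dv` equals
`π|c|²/r² + O(r)` as `r → 0`. -/
theorem boundary_term_asymptotics (p c : ℂ) (R : ℝ) (hR : 0 < R) (h : ℂ → ℂ)
    (hh : DifferentiableOn ℂ h (Metric.ball p R)) :
    ∃ M r₀ : ℝ, 0 < r₀ ∧ ∀ r : ℝ, 0 < r → r < r₀ →
      |(-(∫ θ in (0:ℝ)..(2 * π),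
            (-c / (circleMap p r θ - p) + h (circleMap p r θ)).re *
              deriv (fun t : ℝ =>
                (-c / (circleMap p r t - p) + h (circleMap p r t)).im) θ))
          - π * ‖c‖ ^ 2 / r ^ 2| ≤ M * r := by
  have hballR : Metric.closedBall p (R/2) ⊆ Metric.ball p R :=
    Metric.closedBall_subset_ball (by linarith)
  have hh'R : DifferentiableOn ℂ (deriv h) (Metric.ball p R) :=
    ((hh.analyticOnNhd Metric.isOpen_ball).deriv).differentiableOn
  obtain ⟨M₁, hM₁⟩ := (isCompact_closedBall p (R/2)).exists_bound_of_continuousOn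
    (hh.continuousOn.mono hballR)
  obtain ⟨M₂, hM₂⟩ := (isCompact_closedBall p (R/2)).exists_bound_of_continuousOn
    (hh'R.continuousOn.mono hballR)
  have hM₁0 : 0 ≤ M₁ := le_trans (norm_nonneg _) (hM₁ p (Metric.mem_closedBall_self (by positivity)))
  have hM₂0 : 0 ≤ M₂ := le_trans (norm_nonneg _) (hM₂ p (Metric.mem_closedBall_self (by positivity)))
  refine ⟨π * M₁ * M₂, R/2, by positivity, ?_⟩
  intro r hr hrR
  simp only [circleMap_sub_center]
  set γ : ℝ → ℂ := circleMap p r with hγ_def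
  set e : ℝ → ℂ := circleMap 0 r with he_def
  have he : ∀ θ, e θ ≠ 0 := fun θ => circleMap_ne_center hr.ne'
  have hmem2 : ∀ θ, γ θ ∈ Metric.closedBall p (R/2) :=
    fun θ => Metric.closedBall_subset_closedBall (by linarith) (circleMap_mem_closedBall p hr.le θ)
  have hball : Metric.closedBall p (R/2) ⊆ Metric.ball p R :=
    Metric.closedBall_subset_ball (by linarith)
  have hmem : ∀ θ, γ θ ∈ Metric.ball p R := fun θ => hball (hmem2 θ)
  set F : ℝ → ℂ := fun t => -c / e t + h (γ t) with hF_def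
  set F' : ℝ → ℂ := fun t => c * I / e t + (e t * I) * deriv h (γ t) with hF'_def
  -- derivative of F
  have hF : ∀ θ, HasDerivAt F (F' θ) θ := by
    intro θ
    have h1 : HasDerivAt e (e θ * I) θ := hasDerivAt_circleMap 0 r θ
    have hA : HasDerivAt (fun t => -c / e t) (c * I / e θ) θ := by
      have h2 := (hasDerivAt_const θ (-c)).div h1 (he θ)
      have h3 : (0 * e θ - -c * (e θ * I)) / e θ ^ 2 = c * I / e θ := by
        field_simp [he θ]
        ring
      rwa [h3] at h2
    have hd : DifferentiableAt ℂ h (γ θ) :=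
      hh.differentiableAt (Metric.isOpen_ball.mem_nhds (hmem θ))
    have hB : HasDerivAt (fun t => h (γ t)) ((e θ * I) * deriv h (γ θ)) θ := by
      have := hd.hasDerivAt.scomp θ (hasDerivAt_circleMap p r θ)
      simpa [smul_eq_mul, Function.comp_def, hγ_def, he_def] using this
    exact hA.add hB
  have hFim : ∀ θ, HasDerivAt (fun t => (F t).im) ((F' θ).im) θ := by
    intro θ
    have := Complex.imCLM.hasFDerivAt.comp_hasDerivAt θ (hF θ)
    simpa [Function.comp_def] using this
  -- continuity
  have hcont_e : Continuous e := continuous_circleMap 0 r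
  have hcont_γ : Continuous γ := continuous_circleMap p r
  have hcont_hγ : Continuous fun θ => h (γ θ) :=
    (hh.continuousOn.mono (fun z hz => Metric.ball_subset_ball le_rfl hz)).comp_continuous hcont_γ hmem
  have hcont_h'γ : Continuous fun θ => deriv h (γ θ) := by
    have hh' : DifferentiableOn ℂ (deriv h) (Metric.ball p R) :=
      ((hh.analyticOnNhd Metric.isOpen_ball).deriv).differentiableOn
    exact hh'.continuousOn.comp_continuous hcont_γ hmem
  have hcontF : Continuous F :=
    (continuous_const.div hcont_e he).add hcont_hγ
  have hcontF' : Continuous F' :=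
    (continuous_const.div hcont_e he).add ((hcont_e.mul continuous_const).mul hcont_h'γ)
  -- FTC: integral of (F F').im vanishes
  have hper : F (2 * π) = F 0 := by
    have h1 : γ (2 * π) = γ 0 := by simpa using (periodic_circleMap p r 0)
    have h2 : e (2 * π) = e 0 := by simpa using (periodic_circleMap 0 r 0)
    simp [hF_def, h1, h2]
  have I1 : (∫ θ in (0:ℝ)..(2 * π), (F θ * F' θ).im) = 0 := by
    have hprim : ∀ θ ∈ Set.uIcc (0:ℝ) (2 * π),
        HasDerivAt (fun t => (F t * F t / 2).im) ((F θ * F' θ).im) θ := by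
      intro θ _
      have h1 : HasDerivAt (fun t => F t * F t / 2) (F θ * F' θ) θ := by
        have := ((hF θ).mul (hF θ)).div_const 2
        have heq : (F' θ * F θ + F θ * F' θ) / 2 = F θ * F' θ := by ring
        rwa [heq] at this
      exact Complex.imCLM.hasFDerivAt.comp_hasDerivAt θ h1
    rw [intervalIntegral.integral_eq_sub_of_hasDerivAt hprim
      ((Complex.continuous_im.comp (hcontF.mul hcontF')).intervalIntegrable 0 (2*π))]
    rw [hper]
    ring
  -- Cauchy: circle integral of h vanishes
  have hsubR : Metric.closedBall p r ⊆ Metric.ball p R :=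
    Metric.closedBall_subset_ball (by linarith)
  have hw : (∫ θ in (0:ℝ)..(2 * π), (e θ * I) * h (γ θ)) = 0 := by
    have h0 := circleIntegral_eq_zero_of_differentiable_on_off_countable hr.le
      Set.countable_empty (hh.continuousOn.mono hsubR)
      (fun z hz => hh.differentiableAt (Metric.isOpen_ball.mem_nhds
        (Metric.ball_subset_ball (by linarith) hz.1)))
    simpa [circleIntegral, deriv_circleMap, smul_eq_mul, hγ_def, he_def] using h0
  have hh'd : DifferentiableOn ℂ (deriv h) (Metric.ball p R) :=
    ((hh.analyticOnNhd Metric.isOpen_ball).deriv).differentiableOn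
  have hs0 : (∫ θ in (0:ℝ)..(2 * π), (e θ * I) * (e θ * deriv h (γ θ))) = 0 := by
    have hcq : ContinuousOn (fun z => (z - p) * deriv h z) (Metric.closedBall p r) :=
      ((continuous_id.sub continuous_const).continuousOn).mul (hh'd.continuousOn.mono hsubR)
    have h0 := circleIntegral_eq_zero_of_differentiable_on_off_countable hr.le
      Set.countable_empty hcq
      (fun z hz => ((differentiableAt_id.sub (differentiableAt_const p)).mul
        (hh'd.differentiableAt (Metric.isOpen_ball.mem_nhds
          (Metric.ball_subset_ball (by linarith) hz.1)))))
    simpa [circleIntegral, deriv_circleMap, smul_eq_mul, circleMap_sub_center,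
      hγ_def, he_def, mul_assoc] using h0
  -- algebraic splitting of conj F * F'
  have hr0 : (r:ℂ) ≠ 0 := by exact_mod_cast hr.ne'
  have habs : ∀ θ, ‖e θ‖ = r := by
    intro θ; rw [he_def]; simpa [abs_of_pos hr] using norm_circleMap_zero r θ
  have h1 : ∀ θ, (starRingEnd ℂ) (e θ) = (r:ℂ)^2 / e θ := by
    intro θ
    rw [eq_div_iff (he θ), ← Complex.normSq_eq_conj_mul_self,
      Complex.normSq_eq_norm_sq, habs θ]
    push_cast
    ring
  have h2 : ((‖c‖ ^ 2 / r ^ 2 : ℝ) : ℂ) = (starRingEnd ℂ) c * c / (r:ℂ)^2 := by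
    push_cast [← Complex.normSq_eq_norm_sq, Complex.normSq_eq_conj_mul_self]
    ring
  have hsplit : ∀ θ, (starRingEnd ℂ) (F θ) * F' θ =
      -((‖c‖ ^ 2 / r ^ 2 : ℝ) : ℂ) * I
      + (-(starRingEnd ℂ) c / (r:ℂ)^2) * ((e θ * I) * (e θ * deriv h (γ θ)))
      + (-c / (r:ℂ)^2) * (starRingEnd ℂ) ((e θ * I) * h (γ θ))
      + (starRingEnd ℂ) (h (γ θ)) * ((e θ * I) * deriv h (γ θ)) := by
    intro θ
    simp only [hF_def, hF'_def, map_add, map_div₀, map_neg, map_mul, Complex.conj_I, h1, h2]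
    field_simp [he θ, hr0]
    ring
  -- integrabilities
  have hiS : IntervalIntegrable (fun θ => (-(starRingEnd ℂ) c / (r:ℂ)^2) * ((e θ * I) * (e θ * deriv h (γ θ)))) volume 0 (2*π) :=
    (continuous_const.mul ((hcont_e.mul continuous_const).mul (hcont_e.mul hcont_h'γ))).intervalIntegrable _ _
  have hiW : IntervalIntegrable (fun θ => (-c / (r:ℂ)^2) * (starRingEnd ℂ) ((e θ * I) * h (γ θ))) volume 0 (2*π) :=
    (continuous_const.mul (Complex.continuous_conj.comp ((hcont_e.mul continuous_const).mul hcont_hγ))).intervalIntegrable _ _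
  have hcontT4 : Continuous (fun θ => (starRingEnd ℂ) (h (γ θ)) * ((e θ * I) * deriv h (γ θ))) :=
    (Complex.continuous_conj.comp hcont_hγ).mul ((hcont_e.mul continuous_const).mul hcont_h'γ)
  have hiT4 : IntervalIntegrable (fun θ => (starRingEnd ℂ) (h (γ θ)) * ((e θ * I) * deriv h (γ θ))) volume 0 (2*π) :=
    hcontT4.intervalIntegrable _ _
  -- complex integral of conj F * F'
  have hJ : (∫ θ in (0:ℝ)..(2 * π), (starRingEnd ℂ) (F θ) * F' θ)
      = (2*π) • (-((‖c‖ ^ 2 / r ^ 2 : ℝ) : ℂ) * I)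
        + ∫ θ in (0:ℝ)..(2 * π), (starRingEnd ℂ) (h (γ θ)) * ((e θ * I) * deriv h (γ θ)) := by
    rw [intervalIntegral.integral_congr (g := fun θ =>
      -((‖c‖ ^ 2 / r ^ 2 : ℝ) : ℂ) * I
      + (-(starRingEnd ℂ) c / (r:ℂ)^2) * ((e θ * I) * (e θ * deriv h (γ θ)))
      + (-c / (r:ℂ)^2) * (starRingEnd ℂ) ((e θ * I) * h (γ θ))
      + (starRingEnd ℂ) (h (γ θ)) * ((e θ * I) * deriv h (γ θ))) (fun θ _ => hsplit θ)]
    rw [intervalIntegral.integral_add (((_root_.intervalIntegrable_const).add hiS).add hiW) hiT4,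
        intervalIntegral.integral_add ((_root_.intervalIntegrable_const).add hiS) hiW,
        intervalIntegral.integral_add (_root_.intervalIntegrable_const) hiS]
    rw [intervalIntegral.integral_const]
    rw [intervalIntegral.integral_const_mul, intervalIntegral.integral_const_mul]
    have hWc : (∫ θ in (0:ℝ)..(2 * π), (starRingEnd ℂ) ((e θ * I) * h (γ θ))) = 0 := by
      rw [my_interval_integral_conj, hw, map_zero]
    rw [hs0, hWc]
    simp
  -- imaginary part of the complex integral
  have hIm2 : (∫ θ in (0:ℝ)..(2*π), ((starRingEnd ℂ) (F θ) * F' θ).im)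
      = -(2*π) * (‖c‖ ^ 2 / r ^ 2)
        + (∫ θ in (0:ℝ)..(2*π), (starRingEnd ℂ) (h (γ θ)) * ((e θ * I) * deriv h (γ θ))).im := by
    have hint : IntervalIntegrable (fun θ => (starRingEnd ℂ) (F θ) * F' θ) volume 0 (2*π) :=
      ((Complex.continuous_conj.comp hcontF).mul hcontF').intervalIntegrable _ _
    have h3 := Complex.imCLM.intervalIntegral_comp_comm hint
    calc (∫ θ in (0:ℝ)..(2*π), ((starRingEnd ℂ) (F θ) * F' θ).im)
        = (∫ θ in (0:ℝ)..(2*π), (starRingEnd ℂ) (F θ) * F' θ).im := h3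
      _ = _ := by
          rw [hJ, Complex.add_im, Complex.real_smul]
          simp only [Complex.mul_im, Complex.mul_re, Complex.ofReal_re, Complex.ofReal_im,
            Complex.I_re, Complex.I_im, Complex.neg_re, Complex.neg_im]
          ring
  -- pointwise identity for the integrand
  have hptg : ∀ θ, (F θ).re * (F' θ).im
      = (((F θ * F' θ).im) + (((starRingEnd ℂ) (F θ) * F' θ).im)) / 2 := by
    intro θ
    simp [Complex.mul_im]
    ring
  have hIg : (∫ θ in (0:ℝ)..(2*π), (F θ).re * (F' θ).im)
      = -(π * ‖c‖ ^ 2 / r ^ 2)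
        + (∫ θ in (0:ℝ)..(2*π), (starRingEnd ℂ) (h (γ θ)) * ((e θ * I) * deriv h (γ θ))).im / 2 := by
    rw [intervalIntegral.integral_congr (g := fun θ =>
      (((F θ * F' θ).im) + (((starRingEnd ℂ) (F θ) * F' θ).im)) / 2) (fun θ _ => hptg θ)]
    rw [intervalIntegral.integral_div]
    have i1 : IntervalIntegrable (fun x => (F x * F' x).im) volume 0 (2*π) := by
      apply Continuous.intervalIntegrable
      exact Complex.continuous_im.comp (hcontF.mul hcontF')
    have i2 : IntervalIntegrable (fun x => ((starRingEnd ℂ) (F x) * F' x).im) volume 0 (2*π) := by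
      apply Continuous.intervalIntegrable
      exact Complex.continuous_im.comp ((Complex.continuous_conj.comp hcontF).mul hcontF')
    rw [intervalIntegral.integral_add i1 i2]
    rw [I1, hIm2]
    ring
  -- rewrite the goal integrand
  have hIgoal : (∫ θ in (0:ℝ)..(2 * π),
        (-c / e θ + h (γ θ)).re * deriv (fun t : ℝ => (-c / e t + h (γ t)).im) θ)
      = ∫ θ in (0:ℝ)..(2*π), (F θ).re * (F' θ).im := by
    refine intervalIntegral.integral_congr (fun θ _ => ?_)
    show (F θ).re * deriv (fun t => (F t).im) θ = (F θ).re * (F' θ).im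
    rw [(hFim θ).deriv]
  rw [hIgoal, hIg]
  -- bound the error term
  have hT4b : ∀ θ ∈ Set.uIoc (0:ℝ) (2*π),
      ‖(starRingEnd ℂ) (h (γ θ)) * ((e θ * I) * deriv h (γ θ))‖ ≤ M₁ * (M₂ * r) := by
    intro θ _
    rw [norm_mul, norm_mul, norm_mul]
    have e1 : ‖(starRingEnd ℂ) (h (γ θ))‖ ≤ M₁ := by
      rw [RCLike.norm_conj]; exact hM₁ _ (hmem2 θ)
    have e2 : ‖e θ‖ = r := by rw [habs θ]
    have e3 : ‖deriv h (γ θ)‖ ≤ M₂ := hM₂ _ (hmem2 θ)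
    rw [e2, Complex.norm_I, mul_one]
    calc ‖(starRingEnd ℂ) (h (γ θ))‖ * (r * ‖deriv h (γ θ)‖)
        ≤ M₁ * (r * M₂) := by
          apply mul_le_mul e1 (by nlinarith [norm_nonneg (deriv h (γ θ))]) (by positivity) hM₁0
      _ = M₁ * (M₂ * r) := by ring
  have hTnorm : ‖∫ θ in (0:ℝ)..(2*π), (starRingEnd ℂ) (h (γ θ)) * ((e θ * I) * deriv h (γ θ))‖
      ≤ M₁ * (M₂ * r) * |2*π - 0| :=
    intervalIntegral.norm_integral_le_of_norm_le_const hT4b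
  set X : ℂ := ∫ θ in (0:ℝ)..(2*π), (starRingEnd ℂ) (h (γ θ)) * ((e θ * I) * deriv h (γ θ)) with hX
  have hXim : |X.im| ≤ M₁ * (M₂ * r) * (2*π) := by
    refine le_trans (Complex.abs_im_le_norm X) ?_
    calc ‖X‖ ≤ M₁ * (M₂ * r) * |2*π - 0| := hTnorm
      _ = M₁ * (M₂ * r) * (2*π) := by
          rw [sub_zero, abs_of_pos (by positivity)]
  have hgoal : -(-(π * ‖c‖ ^ 2 / r ^ 2) + X.im / 2) - π * ‖c‖ ^ 2 / r ^ 2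
      = -(X.im/2) := by ring
  rw [hgoal, abs_neg, abs_div]
  rw [abs_of_pos (by norm_num : (0:ℝ) < 2)]
  calc |X.im| / 2 ≤ (M₁ * (M₂ * r) * (2*π)) / 2 := by linarith
    _ = π * M₁ * M₂ * r := by ring
end

section
/- Let $L: \mathbb{C} \to \mathbb{C}$ be holomorphic outside a finite set, and suppose $L(z + \omega_1) - L(z) = \chi_1$ and $L(z + \omega_2) - L(z) = \chi_2$ for constants $\chi_1, \chi_2$, where $\omega_1, \omega_2$ span a lattice. If $T$ is a fundamental parallelogram whose boundary avoids the singularities, then $-\frac{1}{2}\operatorname{Im}\int_{\partial T} L\, d\bar{L} = \frac{1}{2}\operatorname{Im}(\bar\chi_1 \chi_2 - \chi_1 \bar\chi_2)$. -/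
/-- The line integral `∫ L dL̄` along the segment from `A` to `A + w`. -/
noncomputable def sideIntegral (L : ℂ → ℂ) (A w : ℂ) : ℂ :=
  ∫ t in (0:ℝ)..1,
    L (A + t * w) * (starRingEnd ℂ) (deriv (fun s : ℝ => L (A + s * w)) t)

open intervalIntegral Set

lemma sideIntegral_shift (L : ℂ → ℂ) (S : Set ℂ) (hS : S.Finite)
    (hL : DifferentiableOn ℂ L Sᶜ)
    (A w v χv : ℂ) (hχ : ∀ z, L (z + v) - L z = χv)
    (hav : ∀ t ∈ Set.Icc (0:ℝ) 1, A + t * w ∉ S) :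
    sideIntegral L (A + v) w
      = sideIntegral L A w + χv * (starRingEnd ℂ) (L (A + w) - L A) := by
  have openSc : IsOpen Sᶜ := hS.isClosed.isOpen_compl
  set f : ℝ → ℂ := fun t => L (A + t * w) with hf
  set f' : ℝ → ℂ := fun t => deriv L (A + t * w) * w with hf'
  have hmem : ∀ t ∈ Set.Icc (0:ℝ) 1, A + (t:ℂ) * w ∈ Sᶜ := fun t ht => hav t ht
  have hderiv : ∀ t ∈ Set.Icc (0:ℝ) 1, HasDerivAt f (f' t) t := by
    intro t ht
    have hdL : HasDerivAt L (deriv L (A + t * w)) (A + t * w) :=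
      (hL.differentiableAt (openSc.mem_nhds (hmem t ht))).hasDerivAt
    have hinner : HasDerivAt (fun z : ℂ => A + z * w) w (t : ℂ) := by
      simpa using ((hasDerivAt_id (t:ℂ)).mul_const w).const_add A
    have := (hdL.comp (t:ℂ) hinner).comp_ofReal
    simpa [Function.comp] using this
  -- shifted function equals f + const
  have hshift : (fun s : ℝ => L (A + v + s * w)) = fun s => f s + χv := by
    funext s
    have h := hχ (A + s * w)
    have : A + v + (s:ℂ) * w = A + (s:ℂ) * w + v := by ring
    rw [this]
    rw [sub_eq_iff_eq_add] at h
    simp only [hf]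
    rw [h, add_comm]
  -- continuity of f'
  have hcontL' : ContinuousOn (deriv L) Sᶜ :=
    ((hL.analyticOnNhd openSc).deriv).continuousOn
  have hcontf' : ContinuousOn f' (Set.Icc 0 1) := by
    apply ContinuousOn.mul _ continuousOn_const
    exact hcontL'.comp (by fun_prop) (fun t ht => hmem t ht)
  have hcontf : ContinuousOn f (Set.Icc 0 1) := fun t ht =>
    (hderiv t ht).differentiableAt.continuousAt.continuousWithinAt
  have huIcc : Set.uIcc (0:ℝ) 1 = Set.Icc 0 1 := Set.uIcc_of_le zero_le_one
  have hintf' : IntervalIntegrable f' MeasureTheory.volume 0 1 :=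
    (huIcc ▸ hcontf').intervalIntegrable
  have hftc : ∫ t in (0:ℝ)..1, f' t = L (A + w) - L A := by
    have := intervalIntegral.integral_eq_sub_of_hasDerivAt
      (fun t ht => hderiv t (huIcc ▸ ht)) hintf'
    simpa [hf] using this
  have hderiv_eq : ∀ t ∈ Set.Icc (0:ℝ) 1, deriv f t = f' t :=
    fun t ht => (hderiv t ht).deriv
  have hside : sideIntegral L A w = ∫ t in (0:ℝ)..1, f t * (starRingEnd ℂ) (f' t) := by
    unfold sideIntegral
    refine intervalIntegral.integral_congr fun t ht => ?_
    rw [huIcc] at ht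
    simp only [← hf, hderiv_eq t ht]
    rfl
  have hside2 : sideIntegral L (A + v) w
      = ∫ t in (0:ℝ)..1, (f t + χv) * (starRingEnd ℂ) (f' t) := by
    unfold sideIntegral
    refine intervalIntegral.integral_congr fun t ht => ?_
    rw [huIcc] at ht
    have h2 : L (A + v + (t:ℝ) * w) = f t + χv := congrFun hshift t
    rw [h2, hshift]
    rw [show deriv (fun s : ℝ => f s + χv) t = deriv f t from by
      simp [deriv_add_const], hderiv_eq t ht]
  rw [hside2, hside]
  have hint1 : IntervalIntegrable (fun t => f t * (starRingEnd ℂ) (f' t))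
      MeasureTheory.volume 0 1 := by
    apply ContinuousOn.intervalIntegrable
    rw [huIcc]
    exact hcontf.mul (Complex.continuous_conj.comp_continuousOn hcontf')
  have hint2 : IntervalIntegrable (fun t => χv * (starRingEnd ℂ) (f' t))
      MeasureTheory.volume 0 1 := by
    apply ContinuousOn.intervalIntegrable
    rw [huIcc]
    exact continuousOn_const.mul (Complex.continuous_conj.comp_continuousOn hcontf')
  have : ∫ t in (0:ℝ)..1, (f t + χv) * (starRingEnd ℂ) (f' t)
      = (∫ t in (0:ℝ)..1, f t * (starRingEnd ℂ) (f' t))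
        + ∫ t in (0:ℝ)..1, χv * (starRingEnd ℂ) (f' t) := by
    rw [← intervalIntegral.integral_add hint1 hint2]
    congr 1; funext t; ring
  rw [this]
  congr 1
  rw [intervalIntegral.integral_const_mul]
  congr 1
  rw [← hftc]
  rw [intervalIntegral]
  rw [intervalIntegral]
  rw [map_sub, ← integral_conj, ← integral_conj]

/-- For a quasi-periodic `L`, holomorphic outside a finite set, the boundary
integral `-½ Im ∫_{∂T} L dL̄` over a fundamental parallelogram `T` (with
vertex `z₀` and sides `ω₁, ω₂`, boundary avoiding the singularities) equals
`½ Im(χ̄₁χ₂ - χ₁χ̄₂)`. -/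
theorem boundary_integral_quasi_periodic
    (L : ℂ → ℂ) (S : Set ℂ) (hS : S.Finite)
    (hL : DifferentiableOn ℂ L Sᶜ)
    (ω₁ ω₂ : ℂ) (hindep : 0 < (ω₂ / ω₁).im)
    (χ₁ χ₂ : ℂ)
    (hper₁ : ∀ z : ℂ, L (z + ω₁) - L z = χ₁)
    (hper₂ : ∀ z : ℂ, L (z + ω₂) - L z = χ₂)
    (z₀ : ℂ)
    (havoid : ∀ t ∈ Set.Icc (0:ℝ) 1,
      z₀ + t * ω₁ ∉ S ∧ z₀ + t * ω₂ ∉ S ∧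
      z₀ + ω₂ + t * ω₁ ∉ S ∧ z₀ + ω₁ + t * ω₂ ∉ S) :
    -(1 / 2) * (sideIntegral L z₀ ω₁ + sideIntegral L (z₀ + ω₁) ω₂
        - sideIntegral L (z₀ + ω₂) ω₁ - sideIntegral L z₀ ω₂).im =
      (1 / 2) * ((starRingEnd ℂ) χ₁ * χ₂ - χ₁ * (starRingEnd ℂ) χ₂).im := by
  have h3 := sideIntegral_shift L S hS hL z₀ ω₁ ω₂ χ₂ hper₂
    (fun t ht => (havoid t ht).1)
  have h4 := sideIntegral_shift L S hS hL z₀ ω₂ ω₁ χ₁ hper₁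
    (fun t ht => (havoid t ht).2.1)
  rw [hper₁ z₀] at h3
  rw [hper₂ z₀] at h4
  rw [h3, h4]
  have : sideIntegral L z₀ ω₁ + (sideIntegral L z₀ ω₂ + χ₁ * (starRingEnd ℂ) χ₂)
      - (sideIntegral L z₀ ω₁ + χ₂ * (starRingEnd ℂ) χ₁) - sideIntegral L z₀ ω₂
      = χ₁ * (starRingEnd ℂ) χ₂ - χ₂ * (starRingEnd ℂ) χ₁ := by ring
  rw [this]
  rw [show (starRingEnd ℂ) χ₁ * χ₂ = χ₂ * (starRingEnd ℂ) χ₁ from mul_comm _ _]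
  simp only [Complex.sub_im]
  ring
end

section
/- The Lamé polynomial $\ell_2(B) = \frac{4}{81}(B^2 - 3 g_2)(B + 3e_1)(B + 3e_2)(B + 3e_3)$, where $e_1, e_2, e_3$ are the distinct roots of $4x^3 - g_2 x - g_3$, has a multiple root if and only if $g_2 = 0$. -/
/-- The Lamé polynomial `ℓ₂(B) = (4/81)(B² - 3g₂)(B + 3e₁)(B + 3e₂)(B + 3e₃)`
(for pairwise distinct `e₁, e₂, e₃` with `e₁ + e₂ + e₃ = 0`) has a multiple
root if and only if `g₂ = 0`. -/
theorem lame_poly_two_multiple_root_iff (e₁ e₂ e₃ g₂ g₃ : ℂ)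
    (hsum : e₁ + e₂ + e₃ = 0)
    (h12 : e₁ ≠ e₂) (h13 : e₁ ≠ e₃) (h23 : e₂ ≠ e₃)
    (hg₂ : g₂ = -4 * (e₁ * e₂ + e₁ * e₃ + e₂ * e₃))
    (hg₃ : g₃ = 4 * (e₁ * e₂ * e₃)) :
    (∃ B : ℂ,
        (fun X : ℂ => (4 / 81) * (X ^ 2 - 3 * g₂) * (X + 3 * e₁) * (X + 3 * e₂)
            * (X + 3 * e₃)) B = 0 ∧
        deriv (fun X : ℂ => (4 / 81) * (X ^ 2 - 3 * g₂) * (X + 3 * e₁)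
            * (X + 3 * e₂) * (X + 3 * e₃)) B = 0)
      ↔ g₂ = 0 := by
  obtain rfl : e₃ = -e₁ - e₂ := by linear_combination hsum
  have hg : g₂ = 4 * (e₁ ^ 2 + e₁ * e₂ + e₂ ^ 2) := by linear_combination hg₂
  have hderiv : ∀ B : ℂ, deriv (fun X : ℂ => (4 / 81) * (X ^ 2 - 3 * g₂) * (X + 3 * e₁)
      * (X + 3 * e₂) * (X + 3 * (-e₁ - e₂))) B =
      (4 / 81) * (2 * B) * (B + 3 * e₁) * (B + 3 * e₂) * (B + 3 * (-e₁ - e₂))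
      + (4 / 81) * (B ^ 2 - 3 * g₂) * (B + 3 * e₂) * (B + 3 * (-e₁ - e₂))
      + (4 / 81) * (B ^ 2 - 3 * g₂) * (B + 3 * e₁) * (B + 3 * (-e₁ - e₂))
      + (4 / 81) * (B ^ 2 - 3 * g₂) * (B + 3 * e₁) * (B + 3 * e₂) := by
    intro B
    have h0 : HasDerivAt (fun X : ℂ => (4 / 81) * (X ^ 2 - 3 * g₂)) ((4 / 81) * (2 * B)) B := by
      simpa using (((hasDerivAt_pow 2 B).sub_const (3 * g₂)).const_mul (4 / 81 : ℂ))
    have h1 : HasDerivAt (fun X : ℂ => X + 3 * e₁) 1 B := (hasDerivAt_id B).add_const _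
    have h2 : HasDerivAt (fun X : ℂ => X + 3 * e₂) 1 B := (hasDerivAt_id B).add_const _
    have h3 : HasDerivAt (fun X : ℂ => X + 3 * (-e₁ - e₂)) 1 B := (hasDerivAt_id B).add_const _
    have H := ((h0.mul h1).mul h2).mul h3
    refine H.deriv.trans ?_; simp only [Pi.mul_apply]
    ring
  have h13' : 2 * e₁ + e₂ ≠ 0 := fun h => h13 (by linear_combination h)
  have h23' : e₁ + 2 * e₂ ≠ 0 := fun h => h23 (by linear_combination h)
  have h12' : e₁ - e₂ ≠ 0 := sub_ne_zero.2 h12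
  have C1 : ∀ B : ℂ, B ^ 2 - 3 * g₂ = 0 → B + 3 * e₁ = 0 → False := by
    intro B hA hB
    have h : (e₁ + 2 * e₂) ^ 2 = 0 := by
      linear_combination (-1 / 3 : ℂ) * hA + ((B - 3 * e₁) / 3) * hB - hg
    exact h23' (pow_eq_zero_iff two_ne_zero |>.1 h)
  have C2 : ∀ B : ℂ, B ^ 2 - 3 * g₂ = 0 → B + 3 * e₂ = 0 → False := by
    intro B hA hB
    have h : (2 * e₁ + e₂) ^ 2 = 0 := by
      linear_combination (-1 / 3 : ℂ) * hA + ((B - 3 * e₂) / 3) * hB - hg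
    exact h13' (pow_eq_zero_iff two_ne_zero |>.1 h)
  have C3 : ∀ B : ℂ, B ^ 2 - 3 * g₂ = 0 → B + 3 * (-e₁ - e₂) = 0 → False := by
    intro B hA hB
    have h : (e₁ - e₂) ^ 2 = 0 := by
      linear_combination (-1 / 3 : ℂ) * hA + ((B - 3 * (-e₁ - e₂)) / 3) * hB - hg
    exact h12' (pow_eq_zero_iff two_ne_zero |>.1 h)
  constructor
  · rintro ⟨B, hf, hd⟩
    rw [hderiv B] at hd
    have hf' : (4 / 81 : ℂ) * (B ^ 2 - 3 * g₂) * (B + 3 * e₁) * (B + 3 * e₂)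
        * (B + 3 * (-e₁ - e₂)) = 0 := hf
    rcases mul_eq_zero.1 hf' with h | hB3
    · rcases mul_eq_zero.1 h with h | hB2
      · rcases mul_eq_zero.1 h with h | hB1
        · rcases mul_eq_zero.1 h with h | hA
          · norm_num at h
          · -- case B² = 3 g₂
            have h2B : (4 / 81 : ℂ) * (2 * B) * ((B + 3 * e₁) * (B + 3 * e₂)
                * (B + 3 * (-e₁ - e₂))) = 0 := by
              linear_combination hd - ((4 / 81 : ℂ) * ((B + 3 * e₂) * (B + 3 * (-e₁ - e₂))
                + (B + 3 * e₁) * (B + 3 * (-e₁ - e₂)) + (B + 3 * e₁) * (B + 3 * e₂))) * hA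
            rcases mul_eq_zero.1 h2B with h | h
            · rcases mul_eq_zero.1 h with h | hB0
              · norm_num at h
              · have hB0 : B = 0 := by linear_combination hB0 / 2
                linear_combination (-1 / 3 : ℂ) * hA + (B / 3) * hB0
            · rcases mul_eq_zero.1 h with h | hF3
              · rcases mul_eq_zero.1 h with hF1 | hF2
                · exact (C1 B hA hF1).elim
                · exact (C2 B hA hF2).elim
              · exact (C3 B hA hF3).elim
        · -- case B = -3 e₁
          have h' : (4 / 81 : ℂ) * ((B ^ 2 - 3 * g₂) * ((B + 3 * e₂)
              * (B + 3 * (-e₁ - e₂)))) = 0 := by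
            linear_combination hd - ((4 / 81 : ℂ) * ((2 * B) * (B + 3 * e₂) * (B + 3 * (-e₁ - e₂))
              + (B ^ 2 - 3 * g₂) * (B + 3 * (-e₁ - e₂)) + (B ^ 2 - 3 * g₂) * (B + 3 * e₂))) * hB1
          rcases mul_eq_zero.1 h' with h | h
          · norm_num at h
          · rcases mul_eq_zero.1 h with hA | h
            · exact (C1 B hA hB1).elim
            · rcases mul_eq_zero.1 h with hF2 | hF3
              · exact (h12 (by linear_combination (hB1 - hF2) / 3)).elim
              · exact (h13 (by linear_combination (hB1 - hF3) / 3)).elim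
      · -- case B = -3 e₂
        have h' : (4 / 81 : ℂ) * ((B ^ 2 - 3 * g₂) * ((B + 3 * e₁)
            * (B + 3 * (-e₁ - e₂)))) = 0 := by
          linear_combination hd - ((4 / 81 : ℂ) * ((2 * B) * (B + 3 * e₁) * (B + 3 * (-e₁ - e₂))
            + (B ^ 2 - 3 * g₂) * (B + 3 * (-e₁ - e₂)) + (B ^ 2 - 3 * g₂) * (B + 3 * e₁))) * hB2
        rcases mul_eq_zero.1 h' with h | h
        · norm_num at h
        · rcases mul_eq_zero.1 h with hA | h
          · exact (C2 B hA hB2).elim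
          · rcases mul_eq_zero.1 h with hF1 | hF3
            · exact (h12 (by linear_combination (hF1 - hB2) / 3)).elim
            · exact (h23 (by linear_combination (hB2 - hF3) / 3)).elim
    · -- case B = -3 e₃
      have h' : (4 / 81 : ℂ) * ((B ^ 2 - 3 * g₂) * ((B + 3 * e₁) * (B + 3 * e₂))) = 0 := by
        linear_combination hd - ((4 / 81 : ℂ) * ((2 * B) * (B + 3 * e₁) * (B + 3 * e₂)
          + (B ^ 2 - 3 * g₂) * (B + 3 * e₂) + (B ^ 2 - 3 * g₂) * (B + 3 * e₁))) * hB3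
      rcases mul_eq_zero.1 h' with h | h
      · norm_num at h
      · rcases mul_eq_zero.1 h with hA | h
        · exact (C3 B hA hB3).elim
        · rcases mul_eq_zero.1 h with hF1 | hF2
          · exact (h13 (by linear_combination (hF1 - hB3) / 3)).elim
          · exact (h23 (by linear_combination (hF2 - hB3) / 3)).elim
  · intro h
    refine ⟨0, ?_, ?_⟩
    · show (4 / 81 : ℂ) * ((0 : ℂ) ^ 2 - 3 * g₂) * (0 + 3 * e₁) * (0 + 3 * e₂)
        * (0 + 3 * (-e₁ - e₂)) = 0
      rw [h]; ring
    · rw [hderiv 0, h]; ring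
end
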